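/- For every integer m with 1 ≤ m ≤ 7, every complex root of the polynomial p_m(x) = x^m(x³ − x − 1) + x³ + x² − 1 has absolute value exactly 1. (Hence for parameters with |𝒪₂| ≤ 7 the spectral radius of f_X* is 1 and the dynamical degree δ(α,β) = 1, as asserted in Theorem 4.2.) -/

import Mathlib

lemma abs_of_pow_eq_one (z : ℂ) (n : ℕ) (hn : n ≠ 0) (h : z ^ n = 1) :
    ‖z‖ = 1 := by
  have h1 : ‖z‖ ^ n = 1 := by
    rw [← norm_pow, h, norm_one]
  have h0 : (0:ℝ) ≤ ‖z‖ := norm_nonneg z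
  rcases lt_trichotomy (‖z‖) 1 with hlt | heq | hgt
  · exfalso
    have := pow_lt_one₀ h0 hlt hn
    rw [h1] at this; exact lt_irrefl 1 this
  · exact heq
  · exfalso
    have := one_lt_pow₀ hgt hn
    rw [h1] at this; exact lt_irrefl 1 this

/-- For every integer `1 ≤ m ≤ 7`, every complex root of
`p_m(x) = x^m(x³ − x − 1) + x³ + x² − 1` has absolute value exactly `1`. -/
theorem stmt13 (m : ℕ) (h1 : 1 ≤ m) (h7 : m ≤ 7) (z : ℂ)
    (hz : z ^ m * (z ^ 3 - z - 1) + z ^ 3 + z ^ 2 - 1 = 0) :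
    ‖z‖ = 1 := by
  interval_cases m
  · exact abs_of_pow_eq_one z 6 (by norm_num) (by linear_combination (1 - z + z^2) * hz)
  · exact abs_of_pow_eq_one z 5 (by norm_num) (by linear_combination hz)
  · exact abs_of_pow_eq_one z 8 (by norm_num) (by linear_combination (1 + z^2) * hz)
  · exact abs_of_pow_eq_one z 12 (by norm_num)
      (by linear_combination (1 + z^2 + z^3 + z^5) * hz)
  · exact abs_of_pow_eq_one z 18 (by norm_num)
      (by linear_combination (1 + z^2 + z^3 + z^4 + z^5 + z^6 + z^7 + z^8 + z^10) * hz)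
  · exact abs_of_pow_eq_one z 30 (by norm_num)
      (by linear_combination (1 + z^2 + z^3 + z^4 + 2*z^5 + z^6 + 2*z^7 + 2*z^8 + 2*z^9
        + 2*z^10 + 2*z^11 + 2*z^12 + 2*z^13 + 2*z^14 + z^15 + 2*z^16 + z^17 + z^18
        + z^19 + z^21) * hz)
  · -- m = 7 : p₇ = (x²−1)(x³−1)(x⁵−1)
    have hfact : (z^2 - 1) * ((z^3 - 1) * (z^5 - 1)) = 0 := by linear_combination hz
    rcases mul_eq_zero.mp hfact with h | h
    · exact abs_of_pow_eq_one z 2 (by norm_num) (by linear_combination h)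
    · rcases mul_eq_zero.mp h with h' | h'
      · exact abs_of_pow_eq_one z 3 (by norm_num) (by linear_combination h')
      · exact abs_of_pow_eq_one z 5 (by norm_num) (by linear_combination h')
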